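/- Let f be a continuously differentiable function from an open set U ⊆ R⁴ ≅ H to H whose differential at a point satisfies the quaternionic Cauchy–Riemann system ∂F/∂v = (∂F/∂w)·i⁻¹ = (∂F/∂x)·j⁻¹ = (∂F/∂y)·k⁻¹ (where the quaternion-valued partial derivatives are multiplied on the right by the inverses of i, j, k). If F is twice continuously differentiable, then each real component of F is harmonic in each of the variable pairs (v,w), (w,x), (x,y), and (v,y): e.g. ∂²F/∂v² + ∂²F/∂w² = 0. -/

import Mathlib

open Quaternion
open scoped Quaternion

noncomputable def qi : ℍ[ℝ] := ⟨0, 1, 0, 0⟩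
noncomputable def qj : ℍ[ℝ] := ⟨0, 0, 1, 0⟩
noncomputable def qk : ℍ[ℝ] := ⟨0, 0, 0, 1⟩

/-- If `F : U → ℍ` is `C²` on an open set `U ⊆ ℍ ≅ ℝ⁴` and satisfies the
quaternionic Cauchy–Riemann system
`∂F/∂v = (∂F/∂w)·i⁻¹ = (∂F/∂x)·j⁻¹ = (∂F/∂y)·k⁻¹` on `U` (partial derivatives being the
directional derivatives along `1, i, j, k`), then `F` is harmonic in each of the variable pairs
`(v,w)`, `(w,x)`, `(x,y)` and `(v,y)`: the corresponding two-variable Laplacians vanish. -/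
theorem quaternion_CR_implies_pairwise_harmonic (U : Set ℍ[ℝ]) (hU : IsOpen U)
    (F : ℍ[ℝ] → ℍ[ℝ]) (hF : ContDiffOn ℝ 2 F U)
    (hCR : ∀ z ∈ U,
      fderiv ℝ F z 1 = fderiv ℝ F z qi * qi⁻¹ ∧
      fderiv ℝ F z 1 = fderiv ℝ F z qj * qj⁻¹ ∧
      fderiv ℝ F z 1 = fderiv ℝ F z qk * qk⁻¹) :
    ∀ z ∈ U,
      fderiv ℝ (fun w => fderiv ℝ F w 1) z 1 + fderiv ℝ (fun w => fderiv ℝ F w qi) z qi = 0 ∧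
      fderiv ℝ (fun w => fderiv ℝ F w qi) z qi + fderiv ℝ (fun w => fderiv ℝ F w qj) z qj = 0 ∧
      fderiv ℝ (fun w => fderiv ℝ F w qj) z qj + fderiv ℝ (fun w => fderiv ℝ F w qk) z qk = 0 ∧
      fderiv ℝ (fun w => fderiv ℝ F w 1) z 1 + fderiv ℝ (fun w => fderiv ℝ F w qk) z qk = 0 := by
  -- quaternion arithmetic facts
  have hij : qi * qj = qk := by ext <;> simp [Quaternion.re_mul, Quaternion.imI_mul, Quaternion.imJ_mul, Quaternion.imK_mul] <;> simp [qi, qj, qk]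
  have hji : qj * qi = -qk := by ext <;> simp [Quaternion.re_mul, Quaternion.imI_mul, Quaternion.imJ_mul, Quaternion.imK_mul] <;> simp [qi, qj, qk]
  have hii : qi * qi = -1 := by ext <;> simp [Quaternion.re_mul, Quaternion.imI_mul, Quaternion.imJ_mul, Quaternion.imK_mul] <;> simp [qi, qj, qk]
  have hjj : qj * qj = -1 := by ext <;> simp [Quaternion.re_mul, Quaternion.imI_mul, Quaternion.imJ_mul, Quaternion.imK_mul] <;> simp [qi, qj, qk]
  have hkk : qk * qk = -1 := by ext <;> simp [Quaternion.re_mul, Quaternion.imI_mul, Quaternion.imJ_mul, Quaternion.imK_mul] <;> simp [qi, qj, qk]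
  have hine : qi ≠ 0 := by intro h; have := congrArg QuaternionAlgebra.imI h; simp [qi] at this
  have hjne : qj ≠ 0 := by intro h; have := congrArg QuaternionAlgebra.imJ h; simp [qj] at this
  have hkne : qk ≠ 0 := by intro h; have := congrArg QuaternionAlgebra.imK h; simp [qk] at this
  -- differentiability of fderiv F on U
  have h1 : ContDiffOn ℝ 1 (fderiv ℝ F) U := hF.fderiv_of_isOpen hU (by norm_num)
  have hdf : ∀ w ∈ U, DifferentiableAt ℝ (fderiv ℝ F) w := fun w hw =>
    ((h1 w hw).contDiffAt (hU.mem_nhds hw)).differentiableAt one_ne_zero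
  intro z hz
  have hzU : U ∈ nhds z := hU.mem_nhds hz
  -- second derivative application lemma
  have happ : ∀ a b : ℍ[ℝ], fderiv ℝ (fun w => fderiv ℝ F w a) z b
      = fderiv ℝ (fderiv ℝ F) z b a := by
    intro a b
    rw [fderiv_clm_apply (hdf z hz) (differentiableAt_const a)]
    simp
  -- symmetry of second derivative
  have hsymm : ∀ v w : ℍ[ℝ], fderiv ℝ (fderiv ℝ F) z v w = fderiv ℝ (fderiv ℝ F) z w v :=
    (hF.contDiffAt hzU).isSymmSndFDerivAt (by simp)
  -- CR identities as eventual equalities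
  have hmul : ∀ a : ℍ[ℝ], a ≠ 0 → (∀ w ∈ U, fderiv ℝ F w 1 = fderiv ℝ F w a * a⁻¹) →
      ∀ b : ℍ[ℝ], fderiv ℝ (fderiv ℝ F) z b a = fderiv ℝ (fderiv ℝ F) z b 1 * a := by
    intro a ha hCRa b
    have heq : (fun w => fderiv ℝ F w a) =ᶠ[nhds z] (fun w => fderiv ℝ F w 1 * a) := by
      filter_upwards [hzU] with w hw
      rw [hCRa w hw, mul_assoc, inv_mul_cancel₀ ha, mul_one]
    have hg : DifferentiableAt ℝ (fun w => fderiv ℝ F w 1) z :=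
      (hdf z hz).clm_apply (differentiableAt_const _)
    calc fderiv ℝ (fderiv ℝ F) z b a = fderiv ℝ (fun w => fderiv ℝ F w a) z b := (happ a b).symm
      _ = fderiv ℝ (fun w => fderiv ℝ F w 1 * a) z b := by rw [heq.fderiv_eq]
      _ = fderiv ℝ (fun w => fderiv ℝ F w 1) z b * a := by
          rw [fderiv_mul_const' hg]; simp [smul_eq_mul]
      _ = fderiv ℝ (fderiv ℝ F) z b 1 * a := by rw [happ 1 b]
  have hmi : ∀ b : ℍ[ℝ], fderiv ℝ (fderiv ℝ F) z b qi = fderiv ℝ (fderiv ℝ F) z b 1 * qi :=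
    hmul qi hine (fun w hw => (hCR w hw).1)
  have hmj : ∀ b : ℍ[ℝ], fderiv ℝ (fderiv ℝ F) z b qj = fderiv ℝ (fderiv ℝ F) z b 1 * qj :=
    hmul qj hjne (fun w hw => (hCR w hw).2.1)
  have hmk : ∀ b : ℍ[ℝ], fderiv ℝ (fderiv ℝ F) z b qk = fderiv ℝ (fderiv ℝ F) z b 1 * qk :=
    hmul qk hkne (fun w hw => (hCR w hw).2.2)
  set A := fderiv ℝ (fderiv ℝ F) z 1 1 with hA
  -- A = 0
  have hSij : fderiv ℝ (fderiv ℝ F) z qi qj = A * qi * qj := by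
    rw [hmj qi, hsymm qi 1, hmi 1]
  have hSji : fderiv ℝ (fderiv ℝ F) z qj qi = A * qj * qi := by
    rw [hmi qj, hsymm qj 1, hmj 1]
  have hA0 : A = 0 := by
    have := hsymm qi qj
    rw [hSij, hSji, mul_assoc, mul_assoc, hij, hji] at this
    have h3 : A * qk + A * qk = 0 := by nth_rewrite 2 [this]; simp
    have h2 : A * qk = 0 := by
      have h4 : (2:ℝ) • (A * qk) = 0 := by rw [two_smul]; exact h3
      simpa using h4
    rcases mul_eq_zero.mp h2 with h | h
    · exact h
    · exact absurd h hkne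
  -- each second directional derivative vanishes
  have hii' : fderiv ℝ (fderiv ℝ F) z qi qi = 0 := by
    rw [hmi qi, hsymm qi 1, hmi 1, ← hA, hA0, zero_mul, zero_mul]
  have hjj' : fderiv ℝ (fderiv ℝ F) z qj qj = 0 := by
    rw [hmj qj, hsymm qj 1, hmj 1, ← hA, hA0, zero_mul, zero_mul]
  have hkk' : fderiv ℝ (fderiv ℝ F) z qk qk = 0 := by
    rw [hmk qk, hsymm qk 1, hmk 1, ← hA, hA0, zero_mul, zero_mul]
  refine ⟨?_, ?_, ?_, ?_⟩ <;>
    rw [happ, happ] <;> simp [← hA, hA0, hii', hjj', hkk']
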